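/- Let (X, 𝒲) be a space with walls: 𝒲 is a collection of walls {A, Aᶜ} (A ⊆ X) such that for all x, y ∈ X the number w(x,y) of walls separating x from y is finite. Let ℋ = {A ⊆ X : {A, Aᶜ} ∈ 𝒲} be the set of half of-spaces, and let μ be the measure on 2^X given by μ(B) = (1/2)·|B ∩ ℋ| (half the counting measure of the half-spaces in B, with value ∞ when this set is infinite). Then μ is a measured walls structure on X and d_μ(x,y) = w(x,y) for all x, y ∈ X. -/

import Mathlib

open MeasureTheory
open scoped ENNReal

noncomputable section

lemma encard_sUnion_walls {α : Type*} {S : Set (Set α)} (hS : S.Finite) :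
    (∀ Wl ∈ S, Wl.encard = 2) → S.Pairwise (Disjoint : Set α → Set α → Prop) →
    (⋃₀ S).encard = 2 * S.encard := by
  refine Set.Finite.induction_on (motive := fun S _ => (∀ Wl ∈ S, Wl.encard = 2) →
    S.Pairwise (Disjoint : Set α → Set α → Prop) → (⋃₀ S).encard = 2 * S.encard) S hS
    (by simp) ?_
  intro Wl S' hWl hS' ih h2 hdisj
  have hd : Disjoint Wl (⋃₀ S') := Set.disjoint_sUnion_right.2 fun W hW =>
    hdisj (Set.mem_insert _ _) (Set.mem_insert_of_mem _ hW) (fun h => hWl (h ▸ hW))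
  rw [Set.sUnion_insert, Set.encard_union_eq hd, Set.encard_insert_of_notMem hWl,
    h2 Wl (Set.mem_insert _ _), ih (fun W hW => h2 W (Set.mem_insert_of_mem _ hW))
      (hdisj.mono (Set.subset_insert _ _)), mul_add, mul_one, add_comm]

theorem walls_counting_measure (X : Type) (𝒲 : Set (Set (X → Bool)))
    (hwall : ∀ Wl ∈ 𝒲, ∃ A : X → Bool, Wl = {A, fun x => !(A x)})
    (hfin : ∀ x y : X, {Wl | Wl ∈ 𝒲 ∧ ∃ A ∈ Wl, A x ≠ A y}.Finite) :
    ∃ μ : @Measure (X → Bool) (borel (X → Bool)),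
      (∀ B : Set (X → Bool), MeasurableSet[borel (X → Bool)] B →
        μ B = (B ∩ {A : X → Bool | {A, fun x => !(A x)} ∈ 𝒲}).encard / 2) ∧
      (∀ x y : X, μ {A | A x ≠ A y} ≠ ⊤) ∧
      (∀ x y : X, μ {A | A x ≠ A y} = {Wl | Wl ∈ 𝒲 ∧ ∃ A ∈ Wl, A x ≠ A y}.encard) := by
  letI : MeasurableSpace (X → Bool) := borel _
  haveI : BorelSpace (X → Bool) := ⟨rfl⟩
  set cpl : (X → Bool) → (X → Bool) := fun A => fun x => !(A x) with hcpl
  have hcc : ∀ A : X → Bool, cpl (cpl A) = A := by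
    intro A; funext x; simp [hcpl]
  set ℋ : Set (X → Bool) := {A | {A, cpl A} ∈ 𝒲} with hH
  -- the measure
  set μ : Measure (X → Bool) := (2⁻¹ : ℝ≥0∞) • (Measure.count.restrict ℋ) with hμ
  have count_encard : ∀ s : Set (X → Bool), Measure.count s = s.encard := by
    intro s
    rcases s.finite_or_infinite with h | h
    · rw [Measure.count_apply_finite s h, h.encard_eq_coe_toFinset_card]; simp
    · rw [Measure.count_apply_infinite h, Set.encard_eq_top h]; simp
  have key : ∀ B : Set (X → Bool), MeasurableSet B → μ B = (B ∩ ℋ).encard / 2 := by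
    intro B hB
    rw [hμ, Measure.smul_apply, Measure.restrict_apply hB, count_encard,
      smul_eq_mul, ENNReal.div_eq_inv_mul]
  -- measurability of separating sets
  have hmeas : ∀ x y : X, MeasurableSet {A : X → Bool | A x ≠ A y} := by
    intro x y
    have h : Measurable fun A : X → Bool => (A x, A y) :=
      ((continuous_apply x).measurable).prodMk ((continuous_apply y).measurable)
    exact h ((Set.toFinite {p : Bool × Bool | p.1 ≠ p.2}).measurableSet)
  -- identification of separating half-spaces with union of separating walls
  have hunion : ∀ x y : X,
      {A : X → Bool | A x ≠ A y} ∩ ℋ = ⋃₀ {Wl | Wl ∈ 𝒲 ∧ ∃ A ∈ Wl, A x ≠ A y} := by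
    intro x y
    ext A
    constructor
    · rintro ⟨hsep, hA⟩
      exact ⟨{A, cpl A}, ⟨hA, A, Set.mem_insert _ _, hsep⟩, Set.mem_insert _ _⟩
    · rintro ⟨Wl, ⟨hW, C, hC, hCsep⟩, hA⟩
      obtain ⟨B, rfl⟩ := hwall Wl hW
      have hBsep : B x ≠ B y := by
        rcases hC with rfl | hC
        · exact hCsep
        · simp only [Set.mem_singleton_iff] at hC
          subst hC
          simpa using hCsep
      rcases hA with rfl | hA
      · exact ⟨hBsep, hW⟩
      · simp only [Set.mem_singleton_iff] at hA
        subst hA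
        refine ⟨by simpa using hBsep, ?_⟩
        show {cpl B, cpl (cpl B)} ∈ 𝒲
        rw [hcc]
        rwa [Set.pair_comm]
  -- computing the measure of separating sets
  have hcard : ∀ x y : X, ({A : X → Bool | A x ≠ A y} ∩ ℋ).encard
      = 2 * {Wl | Wl ∈ 𝒲 ∧ ∃ A ∈ Wl, A x ≠ A y}.encard := by
    intro x y
    rw [hunion x y]
    refine encard_sUnion_walls (hfin x y) ?_ ?_
    · rintro Wl ⟨hW, C, hC, hCsep⟩
      obtain ⟨B, rfl⟩ := hwall Wl hW
      refine Set.encard_pair ?_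
      intro hBB
      have := congrFun hBB x
      simp [hcpl] at this
    · rintro Wl₁ ⟨hW1, -⟩ Wl₂ ⟨hW2, -⟩ hne
      obtain ⟨B, rfl⟩ := hwall Wl₁ hW1
      obtain ⟨C, rfl⟩ := hwall Wl₂ hW2
      rw [Set.disjoint_left]
      rintro A hA1 hA2
      apply hne
      have h1 : ({B, cpl B} : Set (X → Bool)) = {A, cpl A} := by
        rcases hA1 with rfl | hA1
        · rfl
        · simp only [Set.mem_singleton_iff] at hA1
          subst hA1
          rw [hcc, Set.pair_comm]
      have h2 : ({C, cpl C} : Set (X → Bool)) = {A, cpl A} := by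
        rcases hA2 with rfl | hA2
        · rfl
        · simp only [Set.mem_singleton_iff] at hA2
          subst hA2
          rw [hcc, Set.pair_comm]
      rw [h1, h2]
  have hval : ∀ x y : X, μ {A : X → Bool | A x ≠ A y}
      = {Wl | Wl ∈ 𝒲 ∧ ∃ A ∈ Wl, A x ≠ A y}.encard := by
    intro x y
    rw [key _ (hmeas x y), hcard x y]
    obtain ⟨n, hn⟩ : ∃ n : ℕ, {Wl | Wl ∈ 𝒲 ∧ ∃ A ∈ Wl, A x ≠ A y}.encard = n :=
      ⟨_, (hfin x y).encard_eq_coe_toFinset_card⟩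
    rw [hn]
    push_cast
    rw [mul_comm, mul_div_assoc, ENNReal.div_self (by norm_num) (by norm_num), mul_one]
  exact ⟨μ, key, fun x y => by
    rw [hval x y, (hfin x y).encard_eq_coe_toFinset_card]
    simp, hval⟩

end
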